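/- arXiv:1310.4922 — 2 statements merged into one kernel-verified Lean document; each statement's English description precedes it below -/
import Mathlib

section
/- Let N = 2^n for a natural number n ≥ 1 and let ε ∈ (0,1). Then there exists a natural number d = ⌈(2/ε²)·ln(2N)⌉ and a sequence K = (k_1, …, k_d) of integers with each k_i ∈ {0, …, N−1}, such that for every pair of distinct messages M₁, M₂ ∈ {0, …, N−1}, the quantum hashes are ε-orthogonal: |⟪ψ_K(M₁), ψ_K(M₂)⟫| < ε. -/
open scoped BigOperators

section Aux

-- sum of cos over full period is zero
lemma cos_sum_zero {N m : ℕ} (h1 : 1 ≤ m) (h2 : m < N) :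
    ∑ k ∈ Finset.range N, Real.cos (2 * Real.pi * k * m / N) = 0 := by
  have hN0 : 0 < N := by omega
  have hN : (0:ℝ) < N := by exact_mod_cast hN0
  have hNC : (N:ℂ) ≠ 0 := by exact_mod_cast hN0.ne'
  set z : ℂ := Complex.exp ((2 * Real.pi * m / N : ℝ) * Complex.I) with hz
  have hzne : z ≠ 1 := by
    intro hcon
    rw [hz] at hcon
    obtain ⟨j, hj⟩ := Complex.exp_eq_one_iff.mp hcon
    have h' : (2 * Real.pi * m / N : ℝ) = j * (2 * Real.pi) := by
      have := congrArg Complex.im hj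
      simpa using this
    have h2p : (2 * Real.pi) ≠ 0 := by positivity
    field_simp at h'
    have hmN : (m:ℝ) = j * N := by
      refine mul_left_cancel₀ h2p ?_
      linear_combination (2 * Real.pi) * h'
    have hm1 : (1:ℝ) ≤ m := by exact_mod_cast h1
    have hm2 : (m:ℝ) < N := by exact_mod_cast h2
    rcases le_or_gt j 0 with hj0 | hj1
    · have : (j:ℝ) ≤ 0 := by exact_mod_cast hj0
      nlinarith
    · have : (1:ℝ) ≤ j := by exact_mod_cast hj1
      nlinarith
  have hzN : z ^ N = 1 := by
    rw [hz, ← Complex.exp_nat_mul]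
    have : (N:ℂ) * ((2 * Real.pi * m / N : ℝ) * Complex.I) = (m:ℤ) * (2 * Real.pi * Complex.I) := by
      push_cast
      field_simp
    rw [this, Complex.exp_int_mul_two_pi_mul_I]
  have hsum : ∑ k ∈ Finset.range N, z ^ k = 0 := by
    rw [geom_sum_eq hzne, hzN]; simp
  have hre : ∑ k ∈ Finset.range N, Real.cos (2 * Real.pi * k * m / N)
      = (∑ k ∈ Finset.range N, z ^ k).re := by
    rw [Complex.re_sum]
    refine Finset.sum_congr rfl fun k _ => ?_
    rw [hz, ← Complex.exp_nat_mul]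
    have : (k:ℂ) * ((2 * Real.pi * m / N : ℝ) * Complex.I)
        = ((2 * Real.pi * k * m / N : ℝ) : ℂ) * Complex.I := by
      push_cast; ring
    rw [this, Complex.exp_ofReal_mul_I_re]
  rw [hre, hsum]; simp

lemma hoeffding_pointwise {t x : ℝ} (hx : |x| ≤ 1) :
    Real.exp (t * x) ≤ Real.cosh t + x * Real.sinh t := by
  obtain ⟨h1, h2⟩ := abs_le.mp hx
  have hcvx := convexOn_exp.2 (Set.mem_univ (-t)) (Set.mem_univ t)
    (show (0:ℝ) ≤ (1-x)/2 by linarith) (show (0:ℝ) ≤ (1+x)/2 by linarith)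
    (show (1-x)/2 + (1+x)/2 = 1 by ring)
  simp only [smul_eq_mul] at hcvx
  have harg : (1-x)/2 * (-t) + (1+x)/2 * t = t * x := by ring
  rw [harg] at hcvx
  rw [Real.cosh_eq, Real.sinh_eq]
  calc Real.exp (t*x) ≤ (1-x)/2 * Real.exp (-t) + (1+x)/2 * Real.exp t := hcvx
    _ = (Real.exp t + Real.exp (-t))/2 + x * ((Real.exp t - Real.exp (-t))/2) := by ring

lemma chernoff (N d : ℕ) (ε : ℝ) (hε : 0 < ε) (Y : Fin N → ℝ)
    (hY : ∀ k, |Y k| ≤ 1) (hsum : ∑ k, Y k = 0) :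
    ((Finset.univ.filter (fun K : Fin d → Fin N => (d:ℝ) * ε ≤ ∑ i, Y (K i))).card : ℝ)
      ≤ (N:ℝ)^d * Real.exp (-((d:ℝ) * ε^2 / 2)) := by
  classical
  set B := Finset.univ.filter (fun K : Fin d → Fin N => (d:ℝ) * ε ≤ ∑ i, Y (K i)) with hB
  have h1 : (B.card : ℝ) * Real.exp ((d:ℝ) * ε^2)
      ≤ ∑ K ∈ B, Real.exp (ε * ∑ i, Y (K i)) := by
    have hbound : ∀ K ∈ B, Real.exp ((d:ℝ) * ε^2) ≤ Real.exp (ε * ∑ i, Y (K i)) := by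
      intro K hK
      have hK' := (Finset.mem_filter.mp hK).2
      exact Real.exp_le_exp.mpr (by nlinarith)
    have := Finset.card_nsmul_le_sum B _ _ hbound
    simpa [nsmul_eq_mul] using this
  have h2 : ∑ K ∈ B, Real.exp (ε * ∑ i, Y (K i))
      ≤ ∑ K : Fin d → Fin N, Real.exp (ε * ∑ i, Y (K i)) :=
    Finset.sum_le_sum_of_subset_of_nonneg (Finset.filter_subset _ _)
      (fun _ _ _ => (Real.exp_pos _).le)
  have h3 : ∑ K : Fin d → Fin N, Real.exp (ε * ∑ i, Y (K i))
      = (∑ k : Fin N, Real.exp (ε * Y k)) ^ d := by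
    have : ∀ K : Fin d → Fin N, Real.exp (ε * ∑ i, Y (K i))
        = ∏ i : Fin d, Real.exp (ε * Y (K i)) := by
      intro K
      rw [Finset.mul_sum, Real.exp_sum]
    simp_rw [this]
    rw [← Fintype.prod_sum (fun (_ : Fin d) (k : Fin N) => Real.exp (ε * Y k))]
    simp [Finset.prod_const]
  have h5 : (∑ k : Fin N, Real.exp (ε * Y k)) ≤ (N:ℝ) * Real.exp (ε^2/2) := by
    calc ∑ k : Fin N, Real.exp (ε * Y k)
        ≤ ∑ k : Fin N, (Real.cosh ε + Y k * Real.sinh ε) :=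
          Finset.sum_le_sum (fun k _ => hoeffding_pointwise (hY k))
      _ = (N:ℝ) * Real.cosh ε + (∑ k, Y k) * Real.sinh ε := by
          rw [Finset.sum_add_distrib, ← Finset.sum_mul]
          simp [mul_comm]
      _ = (N:ℝ) * Real.cosh ε := by rw [hsum]; ring
      _ ≤ (N:ℝ) * Real.exp (ε^2/2) := by
          exact mul_le_mul_of_nonneg_left (Real.cosh_le_exp_half_sq ε) (Nat.cast_nonneg N)
  have h6 : (∑ k : Fin N, Real.exp (ε * Y k)) ^ d ≤ ((N:ℝ) * Real.exp (ε^2/2)) ^ d := by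
    have h0 : (0:ℝ) ≤ ∑ k : Fin N, Real.exp (ε * Y k) :=
      Finset.sum_nonneg fun k _ => (Real.exp_pos _).le
    exact pow_le_pow_left₀ h0 h5 d
  have h7 : ((N:ℝ) * Real.exp (ε^2/2)) ^ d = (N:ℝ)^d * Real.exp ((d:ℝ) * ε^2/2) := by
    rw [mul_pow, ← Real.exp_nat_mul]
    ring_nf
  have key : (B.card : ℝ) * Real.exp ((d:ℝ) * ε^2) ≤ (N:ℝ)^d * Real.exp ((d:ℝ) * ε^2/2) := by
    calc (B.card : ℝ) * Real.exp ((d:ℝ) * ε^2) ≤ _ := h1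
      _ ≤ _ := h2
      _ = _ := h3
      _ ≤ _ := h6
      _ = _ := h7
  calc (B.card : ℝ) = (B.card : ℝ) * Real.exp ((d:ℝ) * ε^2) * Real.exp (-((d:ℝ) * ε^2)) := by
        rw [mul_assoc, ← Real.exp_add]; simp
    _ ≤ (N:ℝ)^d * Real.exp ((d:ℝ) * ε^2/2) * Real.exp (-((d:ℝ) * ε^2)) := by
        gcongr
    _ = (N:ℝ)^d * Real.exp (-((d:ℝ) * ε^2 / 2)) := by
        rw [mul_assoc, ← Real.exp_add]
        congr 2
        ring
end Aux

/-- The quantum hash of a message `M ∈ {0, …, N−1}` determined by the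
sequence `K = (k_1, …, k_d)` of integers in `{0, …, N−1}`:
`ψ_K(M)(i,0) = (1/√d)·cos(2π k_i M / N)` and `ψ_K(M)(i,1) = (1/√d)·sin(2π k_i M / N)`. -/
noncomputable def quantumHash (N d : ℕ) (K : Fin d → ℕ) (M : ℕ) :
    EuclideanSpace ℂ (Fin d × Fin 2) := WithLp.toLp 2 fun p : Fin d × Fin 2 =>
  if p.2 = (0 : Fin 2)
  then ((1 / Real.sqrt d) * Real.cos (2 * Real.pi * (K p.1) * M / N) : ℝ)
  else ((1 / Real.sqrt d) * Real.sin (2 * Real.pi * (K p.1) * M / N) : ℝ)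

lemma inner_quantumHash (N d : ℕ) (hd : 0 < d) (K : Fin d → ℕ) (M₁ M₂ : ℕ) :
    (inner ℂ (quantumHash N d K M₁) (quantumHash N d K M₂) : ℂ)
      = ((1/(d:ℝ)) * ∑ i : Fin d,
          Real.cos (2 * Real.pi * (K i) * ((M₁:ℝ) - (M₂:ℝ)) / N) : ℝ) := by
  have hd' : (0:ℝ) < d := by exact_mod_cast hd
  have hsq : (1 / Real.sqrt d) * (1 / Real.sqrt d) = 1 / (d:ℝ) := by
    rw [div_mul_div_comm, Real.mul_self_sqrt hd'.le]; norm_num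
  rw [PiLp.inner_apply]
  simp only [RCLike.inner_apply, Fintype.sum_prod_type, Fin.sum_univ_two, quantumHash]
  have h10 : (1 : Fin 2) ≠ 0 := by decide
  simp only [reduceIte, if_neg h10]
  simp only [Complex.conj_ofReal, ← Complex.ofReal_mul, ← Complex.ofReal_add]
  rw [← Complex.ofReal_sum, Complex.ofReal_inj]
  rw [Finset.mul_sum]
  refine Finset.sum_congr rfl fun i _ => ?_
  have harg : 2 * Real.pi * (K i) * (M₁:ℝ) / N - 2 * Real.pi * (K i) * (M₂:ℝ) / N
      = 2 * Real.pi * (K i) * ((M₁:ℝ) - (M₂:ℝ)) / N := by ring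
  rw [← harg, Real.cos_sub]
  have hsq2 : (Real.sqrt (d:ℝ))⁻¹ ^ 2 = ((d:ℝ))⁻¹ := by
    rw [← Real.sqrt_inv, Real.sq_sqrt (by positivity)]
  ring_nf
  rw [hsq2]
  ring

theorem exists_delta_resistant_quantum_hash
    (n : ℕ) (hn : 1 ≤ n) (N : ℕ) (hN : N = 2 ^ n)
    (ε : ℝ) (hε : ε ∈ Set.Ioo (0 : ℝ) 1)
    (d : ℕ) (hd : d = ⌈(2 / ε ^ 2) * Real.log (2 * N)⌉₊) :
    ∃ K : Fin d → ℕ, (∀ i, K i < N) ∧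
      ∀ M₁ M₂ : ℕ, M₁ < N → M₂ < N → M₁ ≠ M₂ →
        ‖(inner ℂ (quantumHash N d K M₁) (quantumHash N d K M₂) : ℂ)‖ < ε := by
  classical
  obtain ⟨hε0, hε1⟩ := hε
  have hN2 : 2 ≤ N := by
    rw [hN]
    calc 2 = 2^1 := by norm_num
      _ ≤ 2^n := Nat.pow_le_pow_right (by norm_num) hn
  have hN0 : 0 < N := by omega
  have hNR : (2:ℝ) ≤ N := by exact_mod_cast hN2
  have hNR0 : (0:ℝ) < N := by linarith
  have hlogpos : 0 < Real.log (2 * N) := Real.log_pos (by linarith)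
  have hd0 : 0 < d := by
    rw [hd]
    exact Nat.ceil_pos.mpr (mul_pos (by positivity) hlogpos)
  have hdR0 : (0:ℝ) < d := by exact_mod_cast hd0
  have hdlb : (2 / ε^2) * Real.log (2 * N) ≤ (d:ℝ) := by rw [hd]; exact Nat.le_ceil _
  have hlogle : Real.log (2 * N) ≤ (d:ℝ) * ε^2 / 2 := by
    have h1 : Real.log (2 * N) = ((2 / ε^2) * Real.log (2 * N)) * (ε^2 / 2) := by
      field_simp
    rw [h1]
    calc ((2 / ε^2) * Real.log (2 * N)) * (ε^2 / 2) ≤ (d:ℝ) * (ε^2 / 2) :=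
        mul_le_mul_of_nonneg_right hdlb (by positivity)
      _ = (d:ℝ) * ε^2 / 2 := by ring
  have hexp : Real.exp (-((d:ℝ) * ε^2 / 2)) ≤ 1 / (2 * N) := by
    calc Real.exp (-((d:ℝ) * ε^2 / 2)) ≤ Real.exp (-(Real.log (2 * N))) :=
        Real.exp_le_exp.mpr (by linarith)
      _ = 1 / (2 * N) := by
          rw [Real.exp_neg, Real.exp_log (by positivity)]; ring
  -- bad sets
  set Bad : ℕ → Finset (Fin d → Fin N) := fun m =>
    Finset.univ.filter
      (fun K : Fin d → Fin N =>
        (d:ℝ) * ε ≤ |∑ i, Real.cos (2 * Real.pi * (K i : ℕ) * m / N)|) with hBad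
  have hcard : ∀ m ∈ Finset.Icc 1 (N-1), ((Bad m).card : ℝ) ≤ (N:ℝ)^d / N := by
    intro m hm
    obtain ⟨hm1, hm2⟩ := Finset.mem_Icc.mp hm
    have hmN : m < N := by omega
    set Y : Fin N → ℝ := fun k => Real.cos (2 * Real.pi * (k : ℕ) * m / N) with hY
    have hYabs : ∀ k, |Y k| ≤ 1 := fun k => Real.abs_cos_le_one _
    have hYsum : ∑ k, Y k = 0 := by
      rw [hY]
      rw [Fin.sum_univ_eq_sum_range (fun k => Real.cos (2 * Real.pi * k * m / N))]
      exact cos_sum_zero hm1 hmN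
    have hYabs' : ∀ k, |(-Y) k| ≤ 1 := by
      intro k; simp only [Pi.neg_apply, abs_neg]; exact hYabs k
    have hYsum' : ∑ k, (-Y) k = 0 := by simp [hYsum]
    have hplus := chernoff N d ε hε0 Y hYabs hYsum
    have hminus := chernoff N d ε hε0 (-Y) hYabs' hYsum'
    have hsub : Bad m ⊆
        (Finset.univ.filter (fun K : Fin d → Fin N => (d:ℝ) * ε ≤ ∑ i, Y (K i))) ∪
        (Finset.univ.filter (fun K : Fin d → Fin N => (d:ℝ) * ε ≤ ∑ i, (-Y) (K i))) := by
      intro K hK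
      rw [hBad, Finset.mem_filter] at hK
      rcases le_abs.mp hK.2 with h | h
      · exact Finset.mem_union_left _ (Finset.mem_filter.mpr ⟨Finset.mem_univ _, h⟩)
      · refine Finset.mem_union_right _ (Finset.mem_filter.mpr ⟨Finset.mem_univ _, ?_⟩)
        simp only [Pi.neg_apply, Finset.sum_neg_distrib]
        linarith
    have hle1 := Finset.card_le_card hsub
    have h2 := Finset.card_union_le
      (Finset.univ.filter (fun K : Fin d → Fin N => (d:ℝ) * ε ≤ ∑ i, Y (K i)))
      (Finset.univ.filter (fun K : Fin d → Fin N => (d:ℝ) * ε ≤ ∑ i, (-Y) (K i)))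
    have hcast : ((Bad m).card : ℝ) ≤
        (((Finset.univ.filter (fun K : Fin d → Fin N => (d:ℝ) * ε ≤ ∑ i, Y (K i))).card : ℝ)
        + ((Finset.univ.filter (fun K : Fin d → Fin N => (d:ℝ) * ε ≤ ∑ i, (-Y) (K i))).card : ℝ)) := by
      have := le_trans hle1 h2
      exact_mod_cast this
    calc ((Bad m).card : ℝ) ≤ _ := hcast
      _ ≤ (N:ℝ)^d * Real.exp (-((d:ℝ) * ε^2 / 2)) + (N:ℝ)^d * Real.exp (-((d:ℝ) * ε^2 / 2)) :=
          add_le_add hplus hminus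
      _ = 2 * (N:ℝ)^d * Real.exp (-((d:ℝ) * ε^2 / 2)) := by ring
      _ ≤ 2 * (N:ℝ)^d * (1 / (2 * N)) := by
          apply mul_le_mul_of_nonneg_left hexp (by positivity)
      _ = (N:ℝ)^d / N := by field_simp
  -- union bound
  set BadAll := (Finset.Icc 1 (N-1)).biUnion Bad with hBadAll
  have hcardAll : (BadAll.card : ℝ) < (N:ℝ)^d := by
    have h1 : (BadAll.card : ℝ) ≤ ∑ m ∈ Finset.Icc 1 (N-1), ((Bad m).card : ℝ) := by
      have hnat : BadAll.card ≤ ∑ m ∈ Finset.Icc 1 (N-1), (Bad m).card :=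
        Finset.card_biUnion_le
      calc (BadAll.card : ℝ) ≤ ((∑ m ∈ Finset.Icc 1 (N-1), (Bad m).card : ℕ) : ℝ) := by
            exact_mod_cast hnat
        _ = ∑ m ∈ Finset.Icc 1 (N-1), ((Bad m).card : ℝ) := by push_cast; ring
    have h2 : ∑ m ∈ Finset.Icc 1 (N-1), ((Bad m).card : ℝ)
        ≤ ((Finset.Icc 1 (N-1)).card : ℝ) * ((N:ℝ)^d / N) := by
      calc ∑ m ∈ Finset.Icc 1 (N-1), ((Bad m).card : ℝ)
          ≤ ∑ _m ∈ Finset.Icc 1 (N-1), ((N:ℝ)^d / N) := Finset.sum_le_sum hcard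
        _ = ((Finset.Icc 1 (N-1)).card : ℝ) * ((N:ℝ)^d / N) := by
            rw [Finset.sum_const, nsmul_eq_mul]
    have h3 : ((Finset.Icc 1 (N-1)).card : ℝ) = (N:ℝ) - 1 := by
      rw [Nat.card_Icc]
      have : N - 1 + 1 - 1 = N - 1 := by omega
      rw [this]
      push_cast [Nat.cast_sub (by omega : 1 ≤ N)]
      ring
    have h4 : ((Finset.Icc 1 (N-1)).card : ℝ) * ((N:ℝ)^d / N) < (N:ℝ)^d := by
      rw [h3]
      have hpow : (0:ℝ) < (N:ℝ)^d := by positivity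
      rw [div_eq_mul_inv, ← mul_assoc]
      have : ((N:ℝ) - 1) * (N:ℝ)^d < (N:ℝ) * (N:ℝ)^d := by nlinarith
      calc ((N:ℝ) - 1) * (N:ℝ)^d * (N:ℝ)⁻¹ < (N:ℝ) * (N:ℝ)^d * (N:ℝ)⁻¹ := by
            apply mul_lt_mul_of_pos_right this (by positivity)
        _ = (N:ℝ)^d := by field_simp
    calc (BadAll.card : ℝ) ≤ _ := h1
      _ ≤ _ := h2
      _ < (N:ℝ)^d := h4
  -- pick a good K
  have hexists : ∃ K : Fin d → Fin N, K ∉ BadAll := by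
    by_contra hcon
    push_neg at hcon
    have : Finset.univ ⊆ BadAll := fun K _ => hcon K
    have hle := Finset.card_le_card this
    rw [Finset.card_univ] at hle
    have hcardfun : Fintype.card (Fin d → Fin N) = N^d := by
      simp [Fintype.card_fun]
    rw [hcardfun] at hle
    have : ((N^d : ℕ) : ℝ) ≤ (BadAll.card : ℝ) := by exact_mod_cast hle
    push_cast at this
    linarith
  obtain ⟨K, hK⟩ := hexists
  have hgood : ∀ m, 1 ≤ m → m < N →
      |∑ i, Real.cos (2 * Real.pi * ((K i : ℕ)) * m / N)| < (d:ℝ) * ε := by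
    intro m hm1 hm2
    by_contra hcon
    push_neg at hcon
    apply hK
    rw [hBadAll, Finset.mem_biUnion]
    exact ⟨m, Finset.mem_Icc.mpr ⟨hm1, by omega⟩,
      by rw [hBad]; exact Finset.mem_filter.mpr ⟨Finset.mem_univ _, hcon⟩⟩
  refine ⟨fun i => (K i : ℕ), fun i => (K i).isLt, ?_⟩
  intro M₁ M₂ hM₁ hM₂ hne
  rw [inner_quantumHash N d hd0]
  rw [Complex.norm_real, Real.norm_eq_abs, abs_mul]
  have hS : |∑ i : Fin d, Real.cos (2 * Real.pi * ((K i : ℕ)) * ((M₁:ℝ) - (M₂:ℝ)) / N)|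
      < (d:ℝ) * ε := by
    rcases lt_or_gt_of_ne hne with hlt | hgt
    · -- M₁ < M₂, use m = M₂ - M₁ and evenness of cos
      have heq : ∀ i : Fin d,
          Real.cos (2 * Real.pi * ((K i : ℕ)) * ((M₁:ℝ) - (M₂:ℝ)) / N)
          = Real.cos (2 * Real.pi * ((K i : ℕ)) * ((M₂ - M₁ : ℕ) : ℝ) / N) := by
        intro i
        have hc : ((M₂ - M₁ : ℕ) : ℝ) = (M₂:ℝ) - M₁ := by
          rw [Nat.cast_sub hlt.le]
        rw [hc]
        rw [show 2 * Real.pi * ((K i : ℕ)) * ((M₁:ℝ) - (M₂:ℝ)) / N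
          = -(2 * Real.pi * ((K i : ℕ)) * ((M₂:ℝ) - M₁) / N) by ring, Real.cos_neg]
      rw [Finset.sum_congr rfl (fun i _ => heq i)]
      exact hgood (M₂ - M₁) (by omega) (by omega)
    · have heq : ∀ i : Fin d,
          Real.cos (2 * Real.pi * ((K i : ℕ)) * ((M₁:ℝ) - (M₂:ℝ)) / N)
          = Real.cos (2 * Real.pi * ((K i : ℕ)) * ((M₁ - M₂ : ℕ) : ℝ) / N) := by
        intro i
        have hc : ((M₁ - M₂ : ℕ) : ℝ) = (M₁:ℝ) - M₂ := by
          rw [Nat.cast_sub hgt.le]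
        rw [hc]
      rw [Finset.sum_congr rfl (fun i _ => heq i)]
      exact hgood (M₁ - M₂) (by omega) (by omega)
  have h1d : |1 / (d:ℝ)| = 1 / (d:ℝ) := abs_of_pos (by positivity)
  rw [h1d]
  calc 1 / (d:ℝ) * |∑ i : Fin d, Real.cos (2 * Real.pi * ((K i : ℕ)) * ((M₁:ℝ) - (M₂:ℝ)) / N)|
      < 1 / (d:ℝ) * ((d:ℝ) * ε) := by
        apply mul_lt_mul_of_pos_left hS (by positivity)
    _ = ε := by field_simp
end

section
/- For any ε ∈ (0,1) and any natural number N ≥ 2, there exists a sequence K = (k_1, …, k_d) of integers in {0, …, N−1} with d = ⌈(2/ε²)·ln(2N)⌉ such that for every integer l with 1 ≤ l ≤ N−1, the normalized real part of the Fourier transform of K at l is small: |(1/d)·∑_{i=1}^{d} cos(2π k_i l / N)| < ε. -/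
open scoped BigOperators



open Finset in
lemma sum_cos_eq_zero (N l : ℕ) (hN : 2 ≤ N) (hl1 : 1 ≤ l) (hl2 : l ≤ N - 1) :
    ∑ k : Fin N, Real.cos (2 * Real.pi * k * l / N) = 0 := by
  have hN0 : (0:ℝ) < N := by positivity
  set z : ℂ := Complex.exp (2 * Real.pi * l / N * Complex.I) with hz
  have hzk : ∀ k : Fin N, (z ^ (k:ℕ)).re = Real.cos (2 * Real.pi * k * l / N) := by
    intro k
    rw [hz, ← Complex.exp_nat_mul]
    have : (k:ℂ) * (2 * Real.pi * l / N * Complex.I)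
        = ((2 * Real.pi * k * l / N : ℝ) : ℂ) * Complex.I := by
      push_cast; ring
    rw [this, Complex.exp_ofReal_mul_I_re]
  have hz1 : z ≠ 1 := by
    rw [hz, Ne, Complex.exp_eq_one_iff]
    rintro ⟨n, hn⟩
    have him := congrArg Complex.im hn
    simp [Complex.div_im, Complex.div_re] at him
    have : (2 * Real.pi * l / N : ℝ) = n * (2 * Real.pi) := by
      have hNne : (N:ℝ) ≠ 0 := ne_of_gt hN0
      field_simp at him ⊢
      have := mul_right_cancel₀ hNne
        (show 2*Real.pi*(l:ℝ)*N = ((n:ℝ)*(2*Real.pi)*N)*N by linear_combination (2*Real.pi*(N:ℝ)) * him)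
      linarith [this]
    have hpi := Real.pi_pos
    have hlN : (l:ℝ) / N = n := by
      field_simp at this ⊢
      nlinarith [this]
    have h0 : (0:ℝ) < (l:ℝ)/N := by
      have : (0:ℝ) < l := by exact_mod_cast hl1
      positivity
    have h1 : (l:ℝ)/N < 1 := by
      rw [div_lt_one hN0]
      have : l < N := by omega
      exact_mod_cast this
    rw [hlN] at h0 h1
    have : (0:ℤ) < n := by exact_mod_cast h0
    have : (n:ℤ) < 1 := by exact_mod_cast h1
    omega
  have hzN : z ^ N = 1 := by
    rw [hz, ← Complex.exp_nat_mul]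
    have : (N:ℂ) * (2 * Real.pi * l / N * Complex.I) = l * (2 * Real.pi * Complex.I) := by
      have : (N:ℂ) ≠ 0 := by exact_mod_cast hN0.ne'
      field_simp
    rw [this]
    exact_mod_cast Complex.exp_int_mul_two_pi_mul_I (l:ℤ)
  have hsum : ∑ k : Fin N, z ^ (k:ℕ) = 0 := by
    rw [Fin.sum_univ_eq_sum_range (fun k => z ^ k), geom_sum_eq hz1, hzN]
    simp
  calc ∑ k : Fin N, Real.cos (2 * Real.pi * k * l / N)
      = (∑ k : Fin N, z ^ (k:ℕ)).re := by
        rw [Complex.re_sum]; exact (Finset.sum_congr rfl fun k _ => (hzk k).symm)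
    _ = 0 := by rw [hsum]; simp

lemma chord_exp (lam x : ℝ) (hx : -1 ≤ x) (hx' : x ≤ 1) :
    Real.exp (lam * x) ≤ Real.cosh lam + x * Real.sinh lam := by
  have h := convexOn_exp.2 (Set.mem_univ (-lam)) (Set.mem_univ lam)
    (by linarith : (0:ℝ) ≤ (1-x)/2) (by linarith : (0:ℝ) ≤ (1+x)/2) (by ring)
  simp only [smul_eq_mul] at h
  have e1 : (1-x)/2 * (-lam) + (1+x)/2 * lam = lam * x := by ring
  rw [e1] at h
  rw [Real.cosh_eq, Real.sinh_eq]
  calc Real.exp (lam * x) ≤ (1-x)/2 * Real.exp (-lam) + (1+x)/2 * Real.exp lam := h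
    _ = (Real.exp lam + Real.exp (-lam))/2 + x * ((Real.exp lam - Real.exp (-lam))/2) := by ring

-- MGF bound for one coordinate
lemma mgf_bound (N l : ℕ) (hN : 2 ≤ N) (hl1 : 1 ≤ l) (hl2 : l ≤ N - 1) (lam : ℝ)
    (c : Fin N → ℝ) (hc : ∀ k, c k = Real.cos (2 * Real.pi * k * l / N)) (s : ℝ)
    (hs : s = 1 ∨ s = -1) :
    ∑ k : Fin N, Real.exp (lam * (s * c k)) ≤ N * Real.exp (lam^2/2) := by
  have hsum : ∑ k : Fin N, c k = 0 := by
    simp only [hc]; exact sum_cos_eq_zero N l hN hl1 hl2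
  have hbd : ∀ k : Fin N, Real.exp (lam * (s * c k)) ≤ Real.cosh lam + s * c k * Real.sinh lam := by
    intro k
    apply chord_exp
    · have := Real.neg_one_le_cos (2 * Real.pi * k * l / N)
      have h2 := Real.cos_le_one (2 * Real.pi * k * l / N)
      rcases hs with h | h <;> rw [h, hc] <;> nlinarith
    · have := Real.neg_one_le_cos (2 * Real.pi * k * l / N)
      have h2 := Real.cos_le_one (2 * Real.pi * k * l / N)
      rcases hs with h | h <;> rw [h, hc] <;> nlinarith
  calc ∑ k : Fin N, Real.exp (lam * (s * c k))
      ≤ ∑ k : Fin N, (Real.cosh lam + s * c k * Real.sinh lam) :=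
        Finset.sum_le_sum fun k _ => hbd k
    _ = N * Real.cosh lam + s * Real.sinh lam * ∑ k : Fin N, c k := by
        rw [Finset.sum_add_distrib, Finset.sum_const, Finset.card_univ, Fintype.card_fin,
          nsmul_eq_mul, Finset.mul_sum]
        congr 1
        apply Finset.sum_congr rfl
        intro k _
        ring
    _ = N * Real.cosh lam := by rw [hsum]; ring
    _ ≤ N * Real.exp (lam^2/2) := by
        have := Real.cosh_le_exp_half_sq lam
        have hN0 : (0:ℝ) ≤ N := by positivity
        nlinarith

open Finset in
lemma bad_card (N l d : ℕ) (hN : 2 ≤ N) (hl1 : 1 ≤ l) (hl2 : l ≤ N - 1)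
    (ε : ℝ) (hε0 : 0 < ε) (hεd : Real.log (2*N) ≤ ε^2*d/2) :
    ((Finset.univ.filter (fun ω : Fin d → Fin N =>
        ε * d ≤ |∑ i, Real.cos (2*Real.pi*(ω i)*l/N)|)).card : ℝ)
      ≤ (N:ℝ)^d / N := by
  have hN0 : (0:ℝ) < N := by positivity
  set S : (Fin d → Fin N) → ℝ := fun ω => ∑ i, Real.cos (2*Real.pi*(ω i)*l/N) with hS
  set B := Finset.univ.filter (fun ω : Fin d → Fin N => ε * d ≤ |S ω|) with hB
  set c : Fin N → ℝ := fun k => Real.cos (2 * Real.pi * k * l / N) with hc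
  -- MGF products
  have hprod : ∀ s : ℝ, s = 1 ∨ s = -1 →
      ∑ ω : Fin d → Fin N, Real.exp (ε * (s * S ω)) ≤ (N:ℝ)^d * Real.exp (ε^2*d/2) := by
    intro s hs
    have key : ∑ ω : Fin d → Fin N, Real.exp (ε * (s * S ω))
        = ∏ i : Fin d, ∑ k : Fin N, Real.exp (ε * (s * c k)) := by
      rw [Finset.prod_univ_sum]
      rw [Fintype.piFinset_univ]
      apply Finset.sum_congr rfl
      intro ω _
      rw [← Real.exp_sum]
      congr 1
      rw [hS, Finset.mul_sum, Finset.mul_sum]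
    rw [key]
    calc ∏ i : Fin d, ∑ k : Fin N, Real.exp (ε * (s * c k))
        ≤ ∏ i : Fin d, ((N:ℝ) * Real.exp (ε^2/2)) := by
          apply Finset.prod_le_prod
          · intro i _; positivity
          · intro i _; exact mgf_bound N l hN hl1 hl2 ε c (fun k => rfl) s hs
      _ = (N:ℝ)^d * Real.exp (ε^2*d/2) := by
          rw [Finset.prod_const, Finset.card_univ, Fintype.card_fin, mul_pow,
            ← Real.exp_nat_mul]
          ring_nf
  -- Markov step
  have markov : (B.card : ℝ) * Real.exp (ε * (ε * d))
      ≤ ∑ ω : Fin d → Fin N, (Real.exp (ε * S ω) + Real.exp (ε * (-S ω))) := by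
    calc (B.card : ℝ) * Real.exp (ε * (ε * d))
        = ∑ _ω ∈ B, Real.exp (ε * (ε * d)) := by rw [Finset.sum_const, nsmul_eq_mul]
      _ ≤ ∑ ω ∈ B, (Real.exp (ε * S ω) + Real.exp (ε * (-S ω))) := by
          apply Finset.sum_le_sum
          intro ω hω
          rw [hB, Finset.mem_filter] at hω
          have habs : ε * (ε * d) ≤ ε * |S ω| :=
            mul_le_mul_of_nonneg_left hω.2 hε0.le
          rcases abs_cases (S ω) with ⟨h1, _⟩ | ⟨h1, _⟩
          · have : Real.exp (ε * (ε * d)) ≤ Real.exp (ε * S ω) := by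
              apply Real.exp_le_exp.2; rw [← h1]; exact habs
            nlinarith [Real.exp_pos (ε * (-S ω))]
          · have : Real.exp (ε * (ε * d)) ≤ Real.exp (ε * (-S ω)) := by
              apply Real.exp_le_exp.2; rw [← h1]; exact habs
            nlinarith [Real.exp_pos (ε * S ω)]
      _ ≤ ∑ ω : Fin d → Fin N, (Real.exp (ε * S ω) + Real.exp (ε * (-S ω))) := by
          apply Finset.sum_le_sum_of_subset_of_nonneg (Finset.filter_subset _ _)
          intro ω _ _; positivity
  have h1 := hprod 1 (Or.inl rfl)
  have h2 := hprod (-1) (Or.inr rfl)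
  simp only [one_mul, neg_one_mul] at h1 h2
  have hsplit : ∑ ω : Fin d → Fin N, (Real.exp (ε * S ω) + Real.exp (ε * (-S ω)))
      ≤ 2 * ((N:ℝ)^d * Real.exp (ε^2*d/2)) := by
    rw [Finset.sum_add_distrib]
    have e2 : ∀ ω : Fin d → Fin N, Real.exp (ε * (-S ω)) = Real.exp (ε * -S ω) := by
      intro ω; ring_nf
    calc ∑ ω : Fin d → Fin N, Real.exp (ε * S ω) + ∑ ω : Fin d → Fin N, Real.exp (ε * (-S ω))
        ≤ (N:ℝ)^d * Real.exp (ε^2*d/2) + (N:ℝ)^d * Real.exp (ε^2*d/2) := by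
          apply add_le_add h1
          calc ∑ ω : Fin d → Fin N, Real.exp (ε * (-S ω))
              = ∑ ω : Fin d → Fin N, Real.exp (ε * -S ω) := by
                apply Finset.sum_congr rfl; intro ω _; rw [e2]
            _ ≤ _ := h2
      _ = 2 * ((N:ℝ)^d * Real.exp (ε^2*d/2)) := by ring
  -- combine
  have hcard : (B.card : ℝ) * Real.exp (ε * (ε * d)) ≤ 2 * ((N:ℝ)^d * Real.exp (ε^2*d/2)) :=
    le_trans markov hsplit
  have hexp : Real.exp (ε * (ε * d)) = Real.exp (ε^2*d/2) * Real.exp (ε^2*d/2) := by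
    rw [← Real.exp_add]; ring_nf
  have hEpos : (0:ℝ) < Real.exp (ε^2*d/2) := Real.exp_pos _
  have hcard2 : (B.card : ℝ) ≤ 2 * (N:ℝ)^d / Real.exp (ε^2*d/2) := by
    rw [hexp] at hcard
    rw [le_div_iff₀ hEpos]
    exact le_of_mul_le_mul_right (by nlinarith [hcard]) hEpos
  have hlog : (2:ℝ) * N ≤ Real.exp (ε^2*d/2) := by
    have h2N : (0:ℝ) < 2 * N := by positivity
    calc (2:ℝ) * N = Real.exp (Real.log (2*N)) := (Real.exp_log h2N).symm
      _ ≤ Real.exp (ε^2*d/2) := Real.exp_le_exp.2 hεd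
  calc (B.card : ℝ) ≤ 2 * (N:ℝ)^d / Real.exp (ε^2*d/2) := hcard2
    _ ≤ 2 * (N:ℝ)^d / (2*N) := by
        apply div_le_div_of_nonneg_left (by positivity) (by positivity) hlog
    _ = (N:ℝ)^d / N := by field_simp

/-- For any `ε ∈ (0,1)` and `N ≥ 2` there is a sequence `K = (k_1, …, k_d)` of
integers in `{0, …, N−1}` with `d = ⌈(2/ε²)·ln(2N)⌉` such that the normalized
real part of the discrete Fourier transform of `K` is `< ε` at every
`l ∈ {1, …, N−1}`, i.e. `δ(K) < ε`. -/
theorem exists_set_with_small_fourier_real_part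
    (ε : ℝ) (hε : ε ∈ Set.Ioo (0 : ℝ) 1) (N : ℕ) (hN : 2 ≤ N)
    (d : ℕ) (hd : d = ⌈(2 / ε ^ 2) * Real.log (2 * N)⌉₊) :
    ∃ K : Fin d → ℕ, (∀ i, K i < N) ∧
      ∀ l : ℕ, 1 ≤ l → l ≤ N - 1 →
        |(1 / (d : ℝ)) * ∑ i, Real.cos (2 * Real.pi * (K i) * l / N)| < ε := by
  obtain ⟨hε0, hε1⟩ := hε
  have hN0 : (0:ℝ) < N := by positivity
  have hε2 : (0:ℝ) < ε^2 := by positivity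
  have hlog2N : 0 < Real.log (2*N) := by
    apply Real.log_pos
    have : (2:ℝ) ≤ N := by exact_mod_cast hN
    nlinarith
  have hdpos : 0 < d := by
    rw [hd]
    rw [Nat.ceil_pos]
    positivity
  have hdR : (0:ℝ) < d := by exact_mod_cast hdpos
  have hεd : Real.log (2*N) ≤ ε^2*d/2 := by
    have hle : (2 / ε ^ 2) * Real.log (2 * N) ≤ d := by
      rw [hd]; exact Nat.le_ceil _
    rw [div_mul_eq_mul_div, div_le_iff₀ hε2] at hle
    nlinarith
  -- the bad set
  set S : ℕ → (Fin d → Fin N) → ℝ :=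
    fun l ω => ∑ i, Real.cos (2*Real.pi*(ω i)*l/N) with hS
  set B : Finset (Fin d → Fin N) :=
    (Finset.Icc 1 (N-1)).biUnion
      (fun l => Finset.univ.filter (fun ω => ε * d ≤ |S l ω|)) with hB
  have hBcard : (B.card : ℝ) < (N:ℝ)^d := by
    have h1 : B.card ≤ ∑ l ∈ Finset.Icc 1 (N-1),
        (Finset.univ.filter (fun ω : Fin d → Fin N => ε * d ≤ |S l ω|)).card :=
      Finset.card_biUnion_le
    have h2 : ((∑ l ∈ Finset.Icc 1 (N-1),
        (Finset.univ.filter (fun ω : Fin d → Fin N => ε * d ≤ |S l ω|)).card : ℕ) : ℝ)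
        ≤ (N-1 : ℕ) * ((N:ℝ)^d / N) := by
      push_cast
      calc ∑ l ∈ Finset.Icc 1 (N-1),
            ((Finset.univ.filter (fun ω : Fin d → Fin N => ε * d ≤ |S l ω|)).card : ℝ)
          ≤ ∑ l ∈ Finset.Icc 1 (N-1), ((N:ℝ)^d / N) := by
            apply Finset.sum_le_sum
            intro l hl
            rw [Finset.mem_Icc] at hl
            exact bad_card N l d hN hl.1 hl.2 ε hε0 hεd
        _ = (Finset.Icc 1 (N-1)).card * ((N:ℝ)^d / N) := by
            rw [Finset.sum_const, nsmul_eq_mul]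
        _ = ((N-1 : ℕ) : ℝ) * ((N:ℝ)^d / N) := by
            rw [Nat.card_Icc]
            norm_num
    have h3 : ((N-1:ℕ):ℝ) * ((N:ℝ)^d / N) < (N:ℝ)^d := by
      have hlt : ((N-1:ℕ):ℝ) < (N:ℝ) := by
        have : N - 1 < N := by omega
        exact_mod_cast this
      have hpos : (0:ℝ) < (N:ℝ)^d / N := by positivity
      calc ((N-1:ℕ):ℝ) * ((N:ℝ)^d / N) < (N:ℝ) * ((N:ℝ)^d / N) :=
            mul_lt_mul_of_pos_right hlt hpos
        _ = (N:ℝ)^d := by field_simp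
    calc (B.card : ℝ) ≤ _ := by exact_mod_cast Nat.cast_le.2 h1
      _ ≤ ((N-1 : ℕ):ℝ) * ((N:ℝ)^d / N) := h2
      _ < (N:ℝ)^d := h3
  -- find a good ω
  have hex : ∃ ω : Fin d → Fin N, ω ∉ B := by
    by_contra h
    push_neg at h
    have hsub : (Finset.univ : Finset (Fin d → Fin N)) ⊆ B := fun ω _ => h ω
    have := Finset.card_le_card hsub
    rw [Finset.card_univ] at this
    have hcardΩ : Fintype.card (Fin d → Fin N) = N^d := by
      simp [Fintype.card_fun]
    rw [hcardΩ] at this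
    have : ((N^d : ℕ) : ℝ) ≤ (B.card : ℝ) := by exact_mod_cast this
    push_cast at this
    linarith
  obtain ⟨ω, hω⟩ := hex
  refine ⟨fun i => (ω i : ℕ), fun i => (ω i).is_lt, ?_⟩
  intro l hl1 hl2
  have hωl : ¬ (ε * d ≤ |S l ω|) := by
    intro hcon
    apply hω
    rw [hB, Finset.mem_biUnion]
    exact ⟨l, Finset.mem_Icc.2 ⟨hl1, hl2⟩, Finset.mem_filter.2 ⟨Finset.mem_univ _, hcon⟩⟩
  push_neg at hωl
  have : |(1 / (d : ℝ)) * S l ω| = |S l ω| / d := by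
    rw [abs_mul, abs_of_nonneg (by positivity : (0:ℝ) ≤ 1/(d:ℝ))]
    ring
  show |(1 / (d : ℝ)) * S l ω| < ε
  rw [this, div_lt_iff₀ hdR]
  linarith [hωl]
end
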